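/- Let m ≥ 1, let Ω be a symmetric positive definite m×m real matrix, let R ∈ ℝ^m be nonzero, and let W be a symmetric positive definite m×m real matrix. Then (Rᵀ W Ω W R)/(Rᵀ W R)² ≥ 1/(Rᵀ Ω⁻¹ R), with equality when W = Ω⁻¹. In other words, among all weighting matrices W, the sandwich variance V(W) = (RᵀWR)⁻¹ RᵀWΩWR (RᵀWR)⁻¹ is minimized at W = Ω⁻¹, where it equals (Rᵀ Ω⁻¹ R)⁻¹. -/

import Mathlib

open Matrix

/-- Cauchy–Schwarz for the positive definite form given by a matrix. -/
lemma cs_aux {m : ℕ} (Ω : Matrix (Fin m) (Fin m) ℝ) (hΩ : Ω.PosDef)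
    (u v : Fin m → ℝ) :
    (u ⬝ᵥ Ω.mulVec v) ^ 2 ≤ (u ⬝ᵥ Ω.mulVec u) * (v ⬝ᵥ Ω.mulVec v) := by
  have hsymm : ∀ x y : Fin m → ℝ, x ⬝ᵥ Ω.mulVec y = y ⬝ᵥ Ω.mulVec x := by
    intro x y
    have hH : Ωᵀ = Ω := by
      have := hΩ.1
      simpa [Matrix.IsHermitian] using this
    rw [Matrix.dotProduct_mulVec, ← hH, Matrix.vecMul_transpose, dotProduct_comm, hH]
  have hnn : ∀ t : ℝ,
      0 ≤ (v ⬝ᵥ Ω.mulVec v) * (t * t) + (2 * (u ⬝ᵥ Ω.mulVec v)) * t + u ⬝ᵥ Ω.mulVec u := by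
    intro t
    have h0 := hΩ.posSemidef.dotProduct_mulVec_nonneg (u + t • v)
    have : (0:ℝ) ≤ (u + t • v) ⬝ᵥ Ω.mulVec (u + t • v) := by simpa using h0
    have hexp : (u + t • v) ⬝ᵥ Ω.mulVec (u + t • v)
        = (v ⬝ᵥ Ω.mulVec v) * (t * t) + (2 * (u ⬝ᵥ Ω.mulVec v)) * t + u ⬝ᵥ Ω.mulVec u := by
      simp [Matrix.mulVec_add, Matrix.mulVec_smul, dotProduct_add, add_dotProduct,
        dotProduct_smul, smul_dotProduct, smul_eq_mul, hsymm v u]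
      ring
    rw [hexp] at this
    exact this
  have hd := discrim_le_zero hnn
  rw [discrim] at hd
  nlinarith [hd]

/-- **Efficient weighting.** For symmetric positive definite `Ω, W` and
`R ≠ 0`, the sandwich variance satisfies
`(Rᵀ W Ω W R)/(Rᵀ W R)² ≥ 1/(Rᵀ Ω⁻¹ R)`, with equality when `W = Ω⁻¹`. -/
theorem stmt14 (m : ℕ) (hm : 1 ≤ m)
    (Ω W : Matrix (Fin m) (Fin m) ℝ) (hΩ : Ω.PosDef) (hW : W.PosDef)
    (R : Fin m → ℝ) (hR : R ≠ 0) :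
    1 / (R ⬝ᵥ Ω⁻¹.mulVec R) ≤ (R ⬝ᵥ (W * Ω * W).mulVec R) / (R ⬝ᵥ W.mulVec R) ^ 2 ∧
      (W = Ω⁻¹ →
        (R ⬝ᵥ (W * Ω * W).mulVec R) / (R ⬝ᵥ W.mulVec R) ^ 2 = 1 / (R ⬝ᵥ Ω⁻¹.mulVec R)) := by
  have hΩinv : (Ω⁻¹).PosDef := hΩ.inv
  have hWsymm : Wᵀ = W := hW.1
  have hΩunit : IsUnit Ω := (Matrix.isUnit_iff_isUnit_det _).2 hΩ.det_pos.ne'.isUnit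
  have hmul : Ω * Ω⁻¹ = 1 := Matrix.mul_nonsing_inv _ ((Matrix.isUnit_iff_isUnit_det _).1 hΩunit)
  set u := W.mulVec R with hu
  set v := Ω⁻¹.mulVec R with hv
  -- key identities
  have hWR : ∀ x : Fin m → ℝ, R ⬝ᵥ W.mulVec x = u ⬝ᵥ x := by
    intro x
    rw [Matrix.dotProduct_mulVec, ← hWsymm, Matrix.vecMul_transpose]
  have h1 : u ⬝ᵥ Ω.mulVec v = R ⬝ᵥ W.mulVec R := by
    have : Ω.mulVec v = R := by
      rw [hv, Matrix.mulVec_mulVec, hmul, Matrix.one_mulVec]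
    rw [this, hWR R, dotProduct_comm]
  have h2 : u ⬝ᵥ Ω.mulVec u = R ⬝ᵥ (W * Ω * W).mulVec R := by
    rw [hu, ← Matrix.mulVec_mulVec, ← Matrix.mulVec_mulVec, hWR]
  have h3 : v ⬝ᵥ Ω.mulVec v = R ⬝ᵥ Ω⁻¹.mulVec R := by
    have : Ω.mulVec v = R := by
      rw [hv, Matrix.mulVec_mulVec, hmul, Matrix.one_mulVec]
    rw [this, hv, dotProduct_comm]
  have hWpos : 0 < R ⬝ᵥ W.mulVec R := by simpa using hW.dotProduct_mulVec_pos hR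
  have hΩipos : 0 < R ⬝ᵥ Ω⁻¹.mulVec R := by simpa using hΩinv.dotProduct_mulVec_pos hR
  have hcs : (R ⬝ᵥ W.mulVec R) ^ 2 ≤ (R ⬝ᵥ (W * Ω * W).mulVec R) * (R ⬝ᵥ Ω⁻¹.mulVec R) := by
    have := cs_aux Ω hΩ u v
    rw [h1, h2, h3] at this
    exact this
  constructor
  · rw [div_le_div_iff₀ hΩipos (by positivity)]
    linarith [hcs]
  · rintro rfl
    have hWΩW : Ω⁻¹ * Ω * Ω⁻¹ = Ω⁻¹ := by
      rw [Matrix.nonsing_inv_mul _ ((Matrix.isUnit_iff_isUnit_det _).1 hΩunit), Matrix.one_mul]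
    rw [hWΩW, sq, div_mul_eq_div_div, div_self hWpos.ne', one_div]
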